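/- Let ν: ℤ^r → ℤ^d be a surjective homomorphism, let ν*: Hom(ℤ^d, ℤ) → Hom(ℤ^r, ℤ) be its dual, let A = Hom(ℤ^r, ℤ) / ν*(Hom(ℤ^d, ℤ)) with quotient map α (A is a free ℤ-module of rank r − d), and set w_i = α(e_i*), where e_1*, …, e_r* is the basis of Hom(ℤ^r, ℤ) dual to the standard basis e_1, …, e_r of ℤ^r. Then the following are equivalent: (1) for every subset S ⊆ {1, …, r}, if {ν(e_i) : i ∈ S} is linearly independent then it can be extended to a ℤ-basis of ℤ^d; (2) for every subset S ⊆ {1, …, r}, if {w_i : i ∈ S} is linearly independent then it can be extended to a ℤ-basis of A. -/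

import Mathlib

open Submodule LinearMap Module



/-- A submodule of a `ℤ`-module is saturated if `k • y ∈ P` for nonzero `k` implies `y ∈ P`. -/
def Sat {F : Type*} [AddCommGroup F] (P : Submodule ℤ F) : Prop :=
  ∀ (k : ℤ) (y : F), k ≠ 0 → k • y ∈ P → y ∈ P

lemma sat_comap_iff {X Y : Type*} [AddCommGroup X] [AddCommGroup Y]
    (φ : X →ₗ[ℤ] Y) (hφ : Function.Surjective φ) (Q : Submodule ℤ Y) :
    Sat (Q.comap φ) ↔ Sat Q := by
  constructor
  · intro h k y hk hky
    obtain ⟨x, rfl⟩ := hφ y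
    exact h k x hk (by simpa [Submodule.mem_comap, map_smul] using hky)
  · intro h k x hk hkx
    have : k • φ x ∈ Q := by rw [← map_smul]; exact hkx
    exact h k (φ x) hk this

lemma sat_span_image_basis {F ι : Type*} [AddCommGroup F]
    (b : Basis ι ℤ F) (J : Set ι) : Sat (span ℤ (b '' J)) := by
  intro k y hk hky
  rw [b.mem_span_image] at hky ⊢
  have : (b.repr (k • y)).support = (b.repr y).support := by
    rw [map_smul]
    ext i
    simp [Finsupp.mem_support_iff, hk]
  rwa [this] at hky

lemma noZeroSMulDivisors_quotient {F : Type*} [AddCommGroup F]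
    {P : Submodule ℤ F} (hP : Sat P) : NoZeroSMulDivisors ℤ (F ⧸ P) := by
  constructor
  intro k y hky
  by_cases hk : k = 0
  · exact Or.inl hk
  · refine Or.inr ?_
    obtain ⟨x, rfl⟩ := Submodule.mkQ_surjective P y
    have : k • x ∈ P := by
      rw [← Submodule.Quotient.mk_eq_zero (p := P)]
      rw [← Submodule.mkQ_apply, map_smul]
      exact hky
    simpa [Submodule.Quotient.mk_eq_zero] using hP k x hk this

lemma exists_isCompl_of_sat {F : Type*} [AddCommGroup F]
    [Module.Finite ℤ F] (P : Submodule ℤ F) (hP : Sat P) : ∃ C : Submodule ℤ F, IsCompl P C := by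
  haveI := noZeroSMulDivisors_quotient hP
  haveI : Module.Free ℤ (F ⧸ P) := Module.free_of_finite_type_torsion_free'
  obtain ⟨s, hs⟩ := Module.projective_lifting_property P.mkQ (LinearMap.id)
    (Submodule.mkQ_surjective P)
  have hsq : ∀ q, P.mkQ (s q) = q := fun q => congrFun (congrArg DFunLike.coe hs) q
  refine ⟨LinearMap.range s, ?_, ?_⟩
  · rw [Submodule.disjoint_def]
    rintro x hxP ⟨q, rfl⟩
    have h0 : P.mkQ (s q) = 0 := by
      rwa [Submodule.mkQ_apply, Submodule.Quotient.mk_eq_zero]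
    rw [hsq q] at h0
    rw [h0]; simp
  · rw [codisjoint_iff, eq_top_iff]
    intro x _
    have : x - s (P.mkQ x) ∈ P := by
      rw [← Submodule.Quotient.mk_eq_zero (p := P)]
      have : P.mkQ (x - s (P.mkQ x)) = 0 := by
        rw [map_sub, hsq]; simp
      simpa [Submodule.mkQ_apply] using this
    exact Submodule.mem_sup.2 ⟨x - s (P.mkQ x), this, s (P.mkQ x), ⟨P.mkQ x, rfl⟩, by abel⟩


lemma extend_basis {F : Type*} [AddCommGroup F] [Module.Finite ℤ F]
    {ι : Type*} [Finite ι] {x : ι → F} (hx : LinearIndependent ℤ x)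
    (hsat : Sat (span ℤ (Set.range x))) :
    ∃ (n : ℕ) (b : Basis (Fin n) ℤ F), ∀ i, x i ∈ Set.range b := by
  obtain ⟨C, hC⟩ := exists_isCompl_of_sat _ hsat
  set P := span ℤ (Set.range x) with hPdef
  let bs : Basis ι ℤ P := Basis.span hx
  haveI : NoZeroSMulDivisors ℤ (F ⧸ P) := by
    constructor
    intro k y hky
    by_cases hk : k = 0
    · exact Or.inl hk
    · refine Or.inr ?_
      obtain ⟨z, rfl⟩ := Submodule.mkQ_surjective P y
      have : k • z ∈ P := by
        rw [← Submodule.Quotient.mk_eq_zero (p := P), ← Submodule.mkQ_apply, map_smul]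
        exact hky
      simpa [Submodule.Quotient.mk_eq_zero] using hsat k z hk this
  haveI : Module.Free ℤ (F ⧸ P) := Module.free_of_finite_type_torsion_free'
  let eC : (F ⧸ C) ≃ₗ[ℤ] P := Submodule.quotientEquivOfIsCompl C P hC.symm
  let eP : (F ⧸ P) ≃ₗ[ℤ] C := Submodule.quotientEquivOfIsCompl P C hC
  let κ := Module.Free.ChooseBasisIndex ℤ (F ⧸ P)
  let bc : Basis κ ℤ C := (Module.Free.chooseBasis ℤ (F ⧸ P)).map eP
  let bb : Basis (ι ⊕ κ) ℤ F := (bs.prod bc).map (Submodule.prodEquivOfIsCompl P C hC)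
  haveI : Fintype ι := Fintype.ofFinite ι
  haveI : Fintype κ := Fintype.ofFinite κ
  let e := Fintype.equivFin (ι ⊕ κ)
  refine ⟨Fintype.card (ι ⊕ κ), bb.reindex e, fun i => ⟨e (Sum.inl i), ?_⟩⟩
  rw [Basis.reindex_apply, Equiv.symm_apply_apply]
  show (Submodule.prodEquivOfIsCompl P C hC) ((bs.prod bc) (Sum.inl i)) = x i
  rw [Basis.prod_apply]
  simp only [Sum.elim_inl]
  rw [Submodule.coe_prodEquivOfIsCompl']
  show ↑(bs i) + ((0 : C) : F) = x i
  rw [Basis.span_apply hx i]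
  simp


lemma sat_span_of_subset_basis {F : Type*} [AddCommGroup F] {n : ℕ}
    (b : Basis (Fin n) ℤ F) {s : Set F} (hs : ∀ y ∈ s, y ∈ Set.range b) :
    Sat (span ℤ s) := by
  have : span ℤ s = span ℤ (b '' {j | b j ∈ s}) := by
    apply le_antisymm
    · rw [Submodule.span_le]
      intro y hy
      obtain ⟨j, rfl⟩ := hs y hy
      exact subset_span ⟨j, hy, rfl⟩
    · rw [Submodule.span_le]
      rintro y ⟨j, hj, rfl⟩
      exact subset_span hj
  rw [this]
  exact sat_span_image_basis b _

lemma cond_iff_sat {F : Type*} [AddCommGroup F] [Module.Finite ℤ F] {r : ℕ} (x : Fin r → F) :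
    (∀ S : Set (Fin r), LinearIndependent ℤ (fun i : S => x i) →
      ∃ (n : ℕ) (b : Basis (Fin n) ℤ F), ∀ i ∈ S, x i ∈ Set.range b) ↔
    (∀ T : Set (Fin r), Sat (span ℤ (x '' T))) := by
  classical
  constructor
  · intro cond T
    -- choose a maximal linearly independent sub-finset of T
    set TF := (Set.toFinite T).toFinset with hTF
    set C : Finset (Finset (Fin r)) :=
      TF.powerset.filter (fun s => LinearIndependent ℤ (fun i : (s : Set (Fin r)) => x i))
      with hC
    have hCne : C.Nonempty := by
      refine ⟨∅, Finset.mem_filter.2 ⟨Finset.empty_mem_powerset _, ?_⟩⟩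
      haveI : IsEmpty ((↑(∅ : Finset (Fin r)) : Set (Fin r))) := ⟨fun i => by simpa using i.2⟩
      exact linearIndependent_empty_type
    obtain ⟨S, hSC, hSmax⟩ := Finset.exists_max_image C Finset.card hCne
    have hSsub : (S : Set (Fin r)) ⊆ T := by
      intro i hi
      have := (Finset.mem_filter.1 hSC).1
      have := Finset.mem_powerset.1 this hi
      exact (Set.Finite.mem_toFinset _).1 this
    have hSLI : LinearIndependent ℤ (fun i : (S : Set (Fin r)) => x i) :=
      (Finset.mem_filter.1 hSC).2
    -- span (x '' S) is saturated using the extension condition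
    obtain ⟨n, b, hb⟩ := cond (S : Set (Fin r)) hSLI
    have hsatS : Sat (span ℤ (x '' (S : Set (Fin r)))) := by
      apply sat_span_of_subset_basis b
      rintro y ⟨i, hi, rfl⟩
      exact hb i hi
    -- every x t for t ∈ T lies in span (x '' S)
    have hmem : ∀ t ∈ T, x t ∈ span ℤ (x '' (S : Set (Fin r))) := by
      intro t ht
      by_cases htS : t ∈ S
      · exact subset_span ⟨t, htS, rfl⟩
      · -- insert t S is dependent by maximality
        have hins : ¬ LinearIndependent ℤ (fun i : ((insert t S : Finset (Fin r)) : Set (Fin r)) => x i) := by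
          intro hLI
          have hmemC : insert t S ∈ C := by
            refine Finset.mem_filter.2 ⟨Finset.mem_powerset.2 ?_, hLI⟩
            intro j hj
            rcases Finset.mem_insert.1 hj with rfl | hj
            · exact (Set.Finite.mem_toFinset _).2 ht
            · exact (Set.Finite.mem_toFinset _).2 (hSsub hj)
          have := hSmax _ hmemC
          rw [Finset.card_insert_of_notMem htS] at this
          omega
        obtain ⟨g, hgsum, i₀, hgne⟩ := Fintype.not_linearIndependent_iff.1 hins
        -- extend g to the whole of Fin r
        set G : Fin r → ℤ := fun j => if h : j ∈ insert t S then g ⟨j, h⟩ else 0 with hG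
        have hgG : ∀ i : ((insert t S : Finset (Fin r)) : Set (Fin r)), g i = G ↑i := by
          rintro ⟨i, hi⟩
          show g ⟨i, hi⟩ = if h : i ∈ insert t S then g ⟨i, h⟩ else 0
          exact (dif_pos (Finset.mem_coe.mp hi) (t := fun h => g ⟨i, h⟩) (e := fun _ => (0:ℤ))).symm
        have hsum : ∑ j ∈ insert t S, G j • x j = 0 := by
          rw [← Finset.sum_attach (insert t S) (fun j => G j • x j)]
          rw [← hgsum]
          apply Finset.sum_congr rfl
          intro i _
          rw [hgG]
        rw [Finset.sum_insert htS] at hsum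
        have hGt : G t • x t = - ∑ j ∈ S, G j • x j := by linear_combination (norm := abel) hsum
        by_cases hGt0 : G t = 0
        · -- contradiction with linear independence of S
          exfalso
          have hSsum : ∑ j ∈ S, G j • x j = 0 := by
            rw [hGt0] at hGt
            simpa using hGt.symm
          have : ∀ i : (S : Set (Fin r)), G ↑i = 0 := by
            have := Fintype.linearIndependent_iff.1 hSLI (fun i => G ↑i)
            apply this
            rw [← Finset.sum_attach S (fun j => G j • x j)] at hSsum
            exact hSsum
          apply hgne
          rw [hgG i₀]
          rcases Finset.mem_insert.1 i₀.2 with h | h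
          · rw [show (↑i₀ : Fin r) = t from h]; exact hGt0
          · exact this ⟨↑i₀, h⟩
        · -- x t is in the saturation of span (x '' S)
          have : G t • x t ∈ span ℤ (x '' (S : Set (Fin r))) := by
            rw [hGt]
            apply neg_mem
            apply Submodule.sum_mem
            intro j hj
            exact Submodule.smul_mem _ _ (subset_span ⟨j, hj, rfl⟩)
          exact hsatS (G t) (x t) hGt0 this
    have hspan : span ℤ (x '' T) = span ℤ (x '' (S : Set (Fin r))) := by
      apply le_antisymm
      · rw [Submodule.span_le]
        rintro y ⟨t, ht, rfl⟩
        exact hmem t ht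
      · exact Submodule.span_mono (Set.image_mono hSsub)
    rw [hspan]
    exact hsatS
  · intro hsat S hLI
    have : Set.range (fun i : S => x i) = x '' S := (Set.image_eq_range x S).symm
    obtain ⟨n, b, hb⟩ := extend_basis hLI (by rw [this]; exact hsat S)
    exact ⟨n, b, fun i hi => hb ⟨i, hi⟩⟩


lemma sat_dualAnnihilator {X : Type*} [AddCommGroup X] (K : Submodule ℤ X) :
    Sat K.dualAnnihilator := by
  intro k f hk hkf
  rw [Submodule.mem_dualAnnihilator] at hkf ⊢
  intro x hx
  have := hkf x hx
  rw [LinearMap.smul_apply, smul_eq_mul] at this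
  exact (mul_eq_zero.1 this).resolve_left hk

lemma range_dualMap_of_sat {X Y : Type*} [AddCommGroup X] [AddCommGroup Y]
    [Module.Finite ℤ Y] (g : X →ₗ[ℤ] Y) (hg : Sat (LinearMap.range g)) :
    LinearMap.range g.dualMap = (LinearMap.ker g).dualAnnihilator := by
  apply le_antisymm
  · rintro _ ⟨f, rfl⟩
    rw [Submodule.mem_dualAnnihilator]
    intro x hx
    have : g x = 0 := hx
    simp [LinearMap.dualMap_apply, this]
  · intro h hh
    rw [Submodule.mem_dualAnnihilator] at hh
    obtain ⟨C, hC⟩ := exists_isCompl_of_sat _ hg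
    have hle : LinearMap.ker g ≤ LinearMap.ker h := fun x hx => hh x hx
    let hbar : (X ⧸ LinearMap.ker g) →ₗ[ℤ] ℤ := (LinearMap.ker g).liftQ h hle
    let qe : (X ⧸ LinearMap.ker g) ≃ₗ[ℤ] LinearMap.range g := g.quotKerEquivRange
    let f₀ : LinearMap.range g →ₗ[ℤ] ℤ := hbar ∘ₗ (qe.symm : LinearMap.range g →ₗ[ℤ] _)
    let f : Module.Dual ℤ Y := f₀ ∘ₗ (Submodule.linearProjOfIsCompl _ _ hC)
    refine ⟨f, ?_⟩
    ext x
    have h1 : (Submodule.linearProjOfIsCompl _ _ hC) (g x)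
        = ⟨g x, LinearMap.mem_range_self g x⟩ :=
      Submodule.linearProjOfIsCompl_apply_left hC ⟨g x, LinearMap.mem_range_self g x⟩
    have h2 : qe.symm ⟨g x, LinearMap.mem_range_self g x⟩
        = Submodule.Quotient.mk x := by
      rw [LinearEquiv.symm_apply_eq]
      apply Subtype.ext
      exact g.quotKerEquivRange_apply_mk x
    show f (g x) = h x
    show f₀ ((Submodule.linearProjOfIsCompl _ _ hC) (g x)) = h x
    rw [h1]
    show hbar (qe.symm ⟨g x, LinearMap.mem_range_self g x⟩) = h x
    rw [h2]
    exact Submodule.liftQ_apply _ h x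

lemma sat_range_dualMap_iff {X Y : Type*} [AddCommGroup X] [AddCommGroup Y]
    [Module.Finite ℤ X] [Module.Free ℤ X] [Module.Finite ℤ Y] [Module.Free ℤ Y]
    (g : X →ₗ[ℤ] Y) : Sat (LinearMap.range g) ↔ Sat (LinearMap.range g.dualMap) := by
  constructor
  · intro h
    rw [range_dualMap_of_sat g h]
    exact sat_dualAnnihilator _
  · intro h
    have h2 : Sat (LinearMap.range g.dualMap.dualMap) := by
      rw [range_dualMap_of_sat _ h]
      exact sat_dualAnnihilator _
    have hmap : LinearMap.range g.dualMap.dualMap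
        = Submodule.map (Module.evalEquiv ℤ Y).toLinearMap (LinearMap.range g) := by
      have hnat : g.dualMap.dualMap ∘ₗ Module.Dual.eval ℤ X = Module.Dual.eval ℤ Y ∘ₗ g :=
        Module.Dual.eval_naturality g
      have hsurj : Function.Surjective (Module.Dual.eval ℤ X) :=
        (Module.bijective_dual_eval ℤ X).surjective
      rw [Module.evalEquiv_toLinearMap]
      calc LinearMap.range g.dualMap.dualMap
          = LinearMap.range (g.dualMap.dualMap ∘ₗ Module.Dual.eval ℤ X) :=
            (LinearMap.range_comp_of_range_eq_top _ (LinearMap.range_eq_top.2 hsurj)).symm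
        _ = LinearMap.range (Module.Dual.eval ℤ Y ∘ₗ g) := by rw [hnat]
        _ = Submodule.map (Module.Dual.eval ℤ Y) (LinearMap.range g) := LinearMap.range_comp _ _
    have : LinearMap.range g
        = Submodule.comap (Module.evalEquiv ℤ Y).toLinearMap (LinearMap.range g.dualMap.dualMap) := by
      rw [hmap, Submodule.comap_map_eq]
      have : LinearMap.ker (Module.evalEquiv ℤ Y).toLinearMap = ⊥ := LinearMap.ker_eq_bot.2 (Module.evalEquiv ℤ Y).injective
      rw [this, sup_bot_eq]
    rw [this]
    intro k y hk hky
    have : k • (Module.evalEquiv ℤ Y).toLinearMap y ∈ LinearMap.range g.dualMap.dualMap := by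
      rw [← map_smul]; exact hky
    exact h2 k _ hk this


lemma dual_expansion {r : ℕ} (φ : Module.Dual ℤ (Fin r → ℤ)) :
    φ = ∑ j, φ (Pi.single j 1) • (LinearMap.proj j : (Fin r → ℤ) →ₗ[ℤ] ℤ) := by
  apply LinearMap.ext
  intro m
  rw [LinearMap.sum_apply]
  simp only [LinearMap.smul_apply, LinearMap.proj_apply, smul_eq_mul]
  calc φ m = φ (∑ j, Pi.single j (m j)) := by rw [Finset.univ_sum_single]
    _ = ∑ j, φ (Pi.single j (m j)) := map_sum φ _ _
    _ = ∑ j, φ (Pi.single j 1) * m j := by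
        refine Finset.sum_congr rfl fun j _ => ?_
        have h1 : Pi.single j (m j) = (m j • Pi.single j (1:ℤ) : Fin r → ℤ) := by
          funext k
          by_cases hk : k = j <;> simp [Pi.single_apply, hk]
        rw [h1, map_smul, smul_eq_mul, mul_comm]

section Setup
variable {r : ℕ} (T : Set (Fin r)) [Fintype ↥T]

noncomputable def inclT : (↥T → ℤ) →ₗ[ℤ] (Fin r → ℤ) :=
  Fintype.linearCombination ℤ (fun i : T => Pi.single (i : Fin r) 1)

lemma inclT_single (i : ↥T) : inclT T (Pi.single i 1) = Pi.single (i : Fin r) 1 := by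
  classical
  rw [inclT, Fintype.linearCombination_apply_single, one_smul]

lemma resT_comp_inclT :
    (LinearMap.funLeft ℤ ℤ ((↑) : ↥T → Fin r)).comp (inclT T) = LinearMap.id := by
  classical
  apply LinearMap.ext
  intro c
  funext i
  simp only [LinearMap.comp_apply, LinearMap.funLeft_apply, LinearMap.id_apply, inclT,
    Fintype.linearCombination_apply, Finset.sum_apply, Pi.smul_apply, smul_eq_mul,
    Pi.single_apply]
  have hterm : ∀ j : ↥T, (c j * if (i : Fin r) = (j : Fin r) then (1:ℤ) else 0)
      = if i = j then c j else 0 := by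
    intro j
    by_cases h : i = j
    · simp [h]
    · have : (i : Fin r) ≠ (j : Fin r) := fun hc => h (Subtype.ext hc)
      simp [h, this]
  rw [Finset.sum_congr rfl (fun j _ => hterm j), Finset.sum_ite_eq]
  simp

lemma inclT_dualMap_surjective : Function.Surjective (inclT T).dualMap := by
  intro ψ
  refine ⟨(LinearMap.funLeft ℤ ℤ ((↑) : ↥T → Fin r)).dualMap ψ, ?_⟩
  have hcomp : (inclT T).dualMap ∘ₗ (LinearMap.funLeft ℤ ℤ ((↑) : ↥T → Fin r)).dualMap
      = LinearMap.id := by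
    rw [LinearMap.dualMap_comp_dualMap, resT_comp_inclT, LinearMap.dualMap_id]
  exact LinearMap.congr_fun hcomp ψ

/-- The span of the coordinate functionals away from `T`. -/
noncomputable def ET : Submodule ℤ (Module.Dual ℤ (Fin r → ℤ)) :=
  span ℤ ((fun j => (LinearMap.proj j : (Fin r → ℤ) →ₗ[ℤ] ℤ)) '' Tᶜ)

lemma mem_ker_inclT_dualMap_iff (φ : Module.Dual ℤ (Fin r → ℤ)) :
    φ ∈ LinearMap.ker (inclT T).dualMap ↔ ∀ i : ↥T, φ (Pi.single (i : Fin r) 1) = 0 := by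
  constructor
  · intro h i
    have h0 : (inclT T).dualMap φ = 0 := h
    have h1 := LinearMap.congr_fun h0 (Pi.single i 1)
    simp only [LinearMap.dualMap_apply, LinearMap.zero_apply] at h1
    rw [inclT_single] at h1
    exact h1
  · intro h
    have : (inclT T).dualMap φ = 0 := by
      apply LinearMap.ext
      intro c
      rw [LinearMap.zero_apply, LinearMap.dualMap_apply]
      rw [show inclT T c = ∑ i : ↥T, c i • Pi.single (i : Fin r) 1 from rfl]
      rw [map_sum]
      refine Finset.sum_eq_zero fun i _ => ?_
      rw [map_smul, h i, smul_zero]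
    exact this

lemma ker_inclT_dualMap : LinearMap.ker (inclT T).dualMap = ET T := by
  apply le_antisymm
  · intro φ hφ
    rw [mem_ker_inclT_dualMap_iff] at hφ
    rw [ET]
    rw [dual_expansion φ]
    apply Submodule.sum_mem
    intro j _
    by_cases hj : j ∈ T
    · rw [hφ ⟨j, hj⟩, zero_smul]
      exact Submodule.zero_mem _
    · exact Submodule.smul_mem _ _ (subset_span ⟨j, hj, rfl⟩)
  · rw [ET, Submodule.span_le]
    rintro _ ⟨j, hj, rfl⟩
    rw [SetLike.mem_coe, mem_ker_inclT_dualMap_iff]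
    intro i
    rw [LinearMap.proj_apply, Pi.single_apply]
    rw [if_neg]
    intro hij
    exact hj (hij ▸ i.2)

end Setup




/-- For a surjection `ν : ℤ^r → ℤ^d` with `A = (ℤ^r)^* / ν*((ℤ^d)^*)`
and `wᵢ = α(eᵢ*)`, every linearly independent subfamily of `{ν(eᵢ)}` extends to a
ℤ-basis of `ℤ^d` iff every linearly independent subfamily of `{wᵢ}` extends to a
ℤ-basis of `A`. -/
theorem stmt5 (r d : ℕ)
    (ν : (Fin r → ℤ) →ₗ[ℤ] (Fin d → ℤ)) (hν : Function.Surjective ν)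
    (w : Fin r → (Module.Dual ℤ (Fin r → ℤ) ⧸ LinearMap.range ν.dualMap))
    (hw : ∀ i, w i = Submodule.Quotient.mk
      (LinearMap.proj i : (Fin r → ℤ) →ₗ[ℤ] ℤ)) :
    (∀ S : Set (Fin r),
        LinearIndependent ℤ (fun i : S => ν (Pi.single (i : Fin r) 1)) →
        ∃ (n : ℕ) (b : Basis (Fin n) ℤ (Fin d → ℤ)),
          ∀ i ∈ S, ν (Pi.single i 1) ∈ Set.range b) ↔
      (∀ S : Set (Fin r),
        LinearIndependent ℤ (fun i : S => w i) →
        ∃ (n : ℕ) (b : Basis (Fin n) ℤ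
            (Module.Dual ℤ (Fin r → ℤ) ⧸ LinearMap.range ν.dualMap)),
          ∀ i ∈ S, w i ∈ Set.range b) := by
  classical
  have key : ∀ (T : Set (Fin r)),
      Sat (span ℤ ((fun i => ν (Pi.single i 1)) '' T)) ↔ Sat (span ℤ (w '' Tᶜ)) := by
    intro T
    haveI : Fintype ↥T := Fintype.ofFinite ↥T
    set gT := ν.comp (inclT T) with hgT
    have hrange : LinearMap.range gT = span ℤ ((fun i => ν (Pi.single i 1)) '' T) := by
      rw [hgT, LinearMap.range_comp, inclT, Fintype.range_linearCombination,
        Submodule.map_span]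
      congr 1
      rw [← Set.range_comp]
      rw [Set.image_eq_range]
      rfl
    have hdual : LinearMap.range gT.dualMap
        = Submodule.map (inclT T).dualMap (LinearMap.range ν.dualMap) := by
      rw [hgT, ← LinearMap.dualMap_comp_dualMap, LinearMap.range_comp]
    have step3 : Sat (LinearMap.range gT.dualMap)
        ↔ Sat (ET T ⊔ LinearMap.range ν.dualMap) := by
      rw [hdual]
      rw [← sat_comap_iff _ (inclT_dualMap_surjective T)]
      rw [Submodule.comap_map_eq, ker_inclT_dualMap, sup_comm]
    have hWmap : span ℤ (w '' Tᶜ)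
        = Submodule.map (LinearMap.range ν.dualMap).mkQ (ET T) := by
      rw [ET, Submodule.map_span, ← Set.image_comp]
      congr 1
      apply Set.image_congr
      intro j _
      rw [hw j]
      rfl
    have step4 : Sat (span ℤ (w '' Tᶜ))
        ↔ Sat (ET T ⊔ LinearMap.range ν.dualMap) := by
      rw [hWmap]
      rw [← sat_comap_iff _ (Submodule.mkQ_surjective _)]
      rw [Submodule.comap_map_eq, Submodule.ker_mkQ]
    rw [← hrange]
    exact (sat_range_dualMap_iff gT).trans (step3.trans step4.symm)
  have h1 := cond_iff_sat (F := Fin d → ℤ) (fun i => ν (Pi.single i 1))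
  have h2 := cond_iff_sat (F := Module.Dual ℤ (Fin r → ℤ) ⧸ LinearMap.range ν.dualMap) w
  have hmid : (∀ T : Set (Fin r), Sat (span ℤ ((fun i => ν (Pi.single i 1)) '' T)))
      ↔ (∀ T : Set (Fin r), Sat (span ℤ (w '' T))) := by
    constructor
    · intro h T
      have := (key Tᶜ).mp (h Tᶜ)
      rwa [compl_compl] at this
    · intro h T
      exact (key T).mpr (h Tᶜ)
  exact h1.trans (hmid.trans h2.symm)
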